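/- arXiv:1211.0635 — 2 statements merged into one kernel-verified Lean document; each statement's English description precedes it below -/
import Mathlib

section
/- The metric g₀ is Ricci-flat: for every x ∈ ℝⁿ and all j, k ∈ {1,…,n}, one has Σ_{i=1}^{n} (R₍ᵢ,ⱼ,ₖ₎(x))ᵢ = 0, where (v)ᵢ denotes the i-th coordinate of v ∈ ℝⁿ. -/
/-- The `i`-th standard basis vector `eᵢ` of `ℝⁿ` (0-based). -/
def stdBasis (n : ℕ) (i : Fin n) : Fin n → ℝ := fun k => if k = i then 1 else 0

/-- The Christoffel vectors of `g₀`: `Γ₁₁(x) = -x₃ e₄`, `Γ₁₃(x) = Γ₃₁(x) = x₃ e₂`,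
and `Γᵢⱼ(x) = 0` otherwise (1-based indices; here `i j` are 0-based, so
`Γ₀₀(x) = -x₂e₃` and `Γ₀₂(x) = Γ₂₀(x) = x₂e₁`). -/
def Gamma (n : ℕ) (hn : 4 ≤ n) (i j : Fin n) (x : Fin n → ℝ) : Fin n → ℝ :=
  fun k =>
    if (i : ℕ) = 0 ∧ (j : ℕ) = 0 ∧ (k : ℕ) = 3 then -x ⟨2, by omega⟩
    else if (((i : ℕ) = 0 ∧ (j : ℕ) = 2) ∨ ((i : ℕ) = 2 ∧ (j : ℕ) = 0)) ∧ (k : ℕ) = 1 then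
      x ⟨2, by omega⟩
    else 0

/-- The curvature components
`R₍ᵢ,ⱼ,ₖ₎(x) = ∂ᵢΓⱼₖ(x) − ∂ⱼΓᵢₖ(x) + Σₘ (Γⱼₖ(x))ₘ Γᵢₘ(x) − Σₘ (Γᵢₖ(x))ₘ Γⱼₘ(x)`. -/
noncomputable def Rcurv (n : ℕ) (hn : 4 ≤ n) (i j k : Fin n) (x : Fin n → ℝ) :
    Fin n → ℝ :=
  fun l =>
    fderiv ℝ (fun y => Gamma n hn j k y l) x (stdBasis n i)
    - fderiv ℝ (fun y => Gamma n hn i k y l) x (stdBasis n j)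
    + ∑ m : Fin n, Gamma n hn j k x m * Gamma n hn i m x l
    - ∑ m : Fin n, Gamma n hn i k x m * Gamma n hn j m x l


/-- Coefficient of `x₂` in `Gamma`. -/
def coefG (n : ℕ) (i j k : Fin n) : ℝ :=
  if (i : ℕ) = 0 ∧ (j : ℕ) = 0 ∧ (k : ℕ) = 3 then -1
  else if (((i : ℕ) = 0 ∧ (j : ℕ) = 2) ∨ ((i : ℕ) = 2 ∧ (j : ℕ) = 0)) ∧ (k : ℕ) = 1 then 1
  else 0

lemma gamma_eq (n : ℕ) (hn : 4 ≤ n) (i j k : Fin n) (x : Fin n → ℝ) :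
    Gamma n hn i j x k = coefG n i j k * x ⟨2, by omega⟩ := by
  unfold Gamma coefG
  split_ifs <;> ring

lemma fderiv_gamma (n : ℕ) (hn : 4 ≤ n) (i j k : Fin n) (x v : Fin n → ℝ) :
    fderiv ℝ (fun y => Gamma n hn i j y k) x v = coefG n i j k * v ⟨2, by omega⟩ := by
  have h2 : (2 : ℕ) < n := by omega
  have he : (fun y : Fin n → ℝ => Gamma n hn i j y k)
      = fun y => coefG n i j k * y ⟨2, h2⟩ := funext fun y => gamma_eq n hn i j k y
  have hd : HasFDerivAt (fun y : Fin n → ℝ => coefG n i j k * y ⟨2, h2⟩)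
      (coefG n i j k • (ContinuousLinearMap.proj ⟨2, h2⟩ : (Fin n → ℝ) →L[ℝ] ℝ)) x :=
    ((ContinuousLinearMap.proj ⟨2, h2⟩ : (Fin n → ℝ) →L[ℝ] ℝ)).hasFDerivAt.const_mul _
  rw [he, hd.fderiv]
  simp

/-- The metric `g₀` is Ricci-flat: `Σᵢ (R₍ᵢ,ⱼ,ₖ₎(x))ᵢ = 0` for all `x`, `j`, `k`. -/
theorem ricci_flat (n : ℕ) (hn : 4 ≤ n) (x : Fin n → ℝ) (j k : Fin n) :
    ∑ i : Fin n, Rcurv n hn i j k x i = 0 := by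
  have h2 : (2 : ℕ) < n := by omega
  refine Finset.sum_eq_zero fun i _ => ?_
  unfold Rcurv
  rw [fderiv_gamma n hn j k i x, fderiv_gamma n hn i k i x]
  have hA : coefG n j k i * stdBasis n i ⟨2, h2⟩ = 0 := by
    unfold coefG stdBasis
    simp only [Fin.ext_iff, Fin.val_mk]
    split_ifs <;> first | ring1 | (exfalso; omega)
  have hB : coefG n i k i * stdBasis n j ⟨2, h2⟩ = 0 := by
    unfold coefG stdBasis
    simp only [Fin.ext_iff, Fin.val_mk]
    split_ifs <;> first | ring1 | (exfalso; omega)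
  have hC : ∀ m : Fin n, Gamma n hn j k x m * Gamma n hn i m x i = 0 := by
    intro m
    rw [gamma_eq, gamma_eq]
    unfold coefG
    split_ifs <;> first | ring1 | (exfalso; omega)
  have hD : ∀ m : Fin n, Gamma n hn i k x m * Gamma n hn j m x i = 0 := by
    intro m
    rw [gamma_eq, gamma_eq]
    unfold coefG
    split_ifs <;> first | ring1 | (exfalso; omega)
  rw [hA, hB, Finset.sum_eq_zero fun m _ => hC m, Finset.sum_eq_zero fun m _ => hD m]
  ring
end

section
/- For every x ∈ ℝⁿ, the linear span in ℝⁿ of the set of all curvature values {R₍ᵢ,ⱼ,ₖ₎(x) : 1 ≤ i,j,k ≤ n} is exactly the two-dimensional subspace spanned by e₂ and e₄. In particular this span is nonzero at every point. -/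
lemma fderiv_coord (n : ℕ) (c : Fin n) (x v : Fin n → ℝ) :
    fderiv ℝ (fun y : Fin n → ℝ => y c) x v = v c := by
  have h : (fun y : Fin n → ℝ => y c) = (ContinuousLinearMap.proj (R := ℝ)
      (φ := fun _ : Fin n => ℝ) c) := rfl
  rw [h, ContinuousLinearMap.fderiv]
  rfl

lemma gamma_fderiv (n : ℕ) (hn : 4 ≤ n) (i j k l : Fin n) (x : Fin n → ℝ) :
    fderiv ℝ (fun y => Gamma n hn j k y l) x (stdBasis n i) =
    (if ((j:ℕ)=0 ∧ (k:ℕ)=0 ∧ (l:ℕ)=3) then -(if (i:ℕ)=2 then (1:ℝ) else 0)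
     else if ((((j:ℕ)=0∧(k:ℕ)=2)∨((j:ℕ)=2∧(k:ℕ)=0))∧(l:ℕ)=1) then (if (i:ℕ)=2 then (1:ℝ) else 0)
     else 0) := by
  have hstd : stdBasis n i ⟨2, by omega⟩ = (if (i:ℕ)=2 then (1:ℝ) else 0) := by
    simp only [stdBasis]
    by_cases h : (i:ℕ) = 2
    · rw [if_pos (by exact Fin.ext h.symm), if_pos h]
    · rw [if_neg (fun he => h (by rw [← he])), if_neg h]
  by_cases h1 : (j:ℕ)=0 ∧ (k:ℕ)=0 ∧ (l:ℕ)=3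
  · have : (fun y : Fin n → ℝ => Gamma n hn j k y l) = fun y => -(y ⟨2, by omega⟩) := by
      funext y; simp [Gamma, h1]
    rw [this, if_pos h1, fderiv_fun_neg]
    simp only [ContinuousLinearMap.neg_apply, fderiv_coord, hstd]
  · by_cases h2 : (((j:ℕ)=0∧(k:ℕ)=2)∨((j:ℕ)=2∧(k:ℕ)=0))∧(l:ℕ)=1
    · have : (fun y : Fin n → ℝ => Gamma n hn j k y l) = fun y => y ⟨2, by omega⟩ := by
        funext y; simp only [Gamma, if_neg h1, if_pos h2]
      rw [this, if_neg h1, if_pos h2, fderiv_coord, hstd]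
    · have : (fun y : Fin n → ℝ => Gamma n hn j k y l) = fun _ => 0 := by
        funext y; simp only [Gamma, if_neg h1, if_neg h2]
      rw [this, if_neg h1, if_neg h2, fderiv_fun_const]
      rfl

lemma quad_zero (n : ℕ) (hn : 4 ≤ n) (i j k l : Fin n) (x : Fin n → ℝ) :
    ∑ m : Fin n, Gamma n hn j k x m * Gamma n hn i m x l = 0 := by
  apply Finset.sum_eq_zero
  intro m _
  simp only [Gamma]
  split_ifs <;> first | ring1 | omega | simp_all | (simp_all; omega)

lemma rcurv_eq (n : ℕ) (hn : 4 ≤ n) (i j k l : Fin n) (x : Fin n → ℝ) :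
    Rcurv n hn i j k x l =
    (if ((j:ℕ)=0 ∧ (k:ℕ)=0 ∧ (l:ℕ)=3) then -(if (i:ℕ)=2 then (1:ℝ) else 0)
     else if ((((j:ℕ)=0∧(k:ℕ)=2)∨((j:ℕ)=2∧(k:ℕ)=0))∧(l:ℕ)=1) then (if (i:ℕ)=2 then (1:ℝ) else 0)
     else 0)
    - (if ((i:ℕ)=0 ∧ (k:ℕ)=0 ∧ (l:ℕ)=3) then -(if (j:ℕ)=2 then (1:ℝ) else 0)
     else if ((((i:ℕ)=0∧(k:ℕ)=2)∨((i:ℕ)=2∧(k:ℕ)=0))∧(l:ℕ)=1) then (if (j:ℕ)=2 then (1:ℝ) else 0)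
     else 0) := by
  simp only [Rcurv, gamma_fderiv, quad_zero]
  ring

example : True := trivial

lemma rcurv_off (n : ℕ) (hn : 4 ≤ n) (i j k l : Fin n) (x : Fin n → ℝ)
    (h1 : (l:ℕ) ≠ 1) (h3 : (l:ℕ) ≠ 3) : Rcurv n hn i j k x l = 0 := by
  rw [rcurv_eq]
  rw [if_neg (by omega), if_neg (by omega), if_neg (by omega), if_neg (by omega)]
  ring

lemma rcurv202 (n : ℕ) (hn : 4 ≤ n) (x : Fin n → ℝ) :
    Rcurv n hn ⟨2, by linarith⟩ ⟨0, by linarith⟩ ⟨2, by linarith⟩ x = stdBasis n ⟨1, by linarith⟩ := by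
  funext l
  rw [rcurv_eq]
  simp only [stdBasis, Fin.ext_iff, Fin.val_mk]
  split_ifs <;> first | ring1 | omega | simp_all | (simp_all; omega)

lemma rcurv200 (n : ℕ) (hn : 4 ≤ n) (x : Fin n → ℝ) :
    Rcurv n hn ⟨2, by linarith⟩ ⟨0, by linarith⟩ ⟨0, by linarith⟩ x = -stdBasis n ⟨3, by linarith⟩ := by
  funext l
  rw [rcurv_eq]
  simp only [stdBasis, Fin.ext_iff, Pi.neg_apply, Fin.val_mk]
  split_ifs <;> first | ring1 | omega | simp_all | (simp_all; omega)

lemma decomp (n : ℕ) (hn : 4 ≤ n) (v : Fin n → ℝ)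
    (h : ∀ l : Fin n, (l:ℕ) ≠ 1 → (l:ℕ) ≠ 3 → v l = 0) :
    v = v ⟨1, by linarith⟩ • stdBasis n ⟨1, by linarith⟩ + v ⟨3, by linarith⟩ • stdBasis n ⟨3, by linarith⟩ := by
  funext l
  simp only [Pi.add_apply, Pi.smul_apply, stdBasis, smul_eq_mul, Fin.ext_iff, Fin.val_mk]
  by_cases h1 : (l:ℕ) = 1
  · have hl : l = ⟨1, by linarith⟩ := Fin.ext h1
    rw [if_pos h1, if_neg (by omega), hl]
    ring
  · by_cases h3 : (l:ℕ) = 3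
    · have hl : l = ⟨3, by linarith⟩ := Fin.ext h3
      rw [if_neg h1, if_pos h3, hl]
      ring
    · rw [h l h1 h3, if_neg h1, if_neg h3]
      ring


/-- At every `x`, the span of all curvature values `R₍ᵢ,ⱼ,ₖ₎(x)` is exactly the
two-dimensional subspace spanned by `e₂` and `e₄` (0-based: indices 1 and 3);
in particular it is nonzero at every point. -/
theorem curvature_image_span (n : ℕ) (hn : 4 ≤ n) (x : Fin n → ℝ) :
    Submodule.span ℝ {v : Fin n → ℝ | ∃ i j k : Fin n, v = Rcurv n hn i j k x} =
      Submodule.span ℝ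
        ({stdBasis n ⟨1, by omega⟩, stdBasis n ⟨3, by omega⟩} : Set (Fin n → ℝ)) ∧
    Submodule.span ℝ {v : Fin n → ℝ | ∃ i j k : Fin n, v = Rcurv n hn i j k x} ≠ ⊥ := by
  have he1 : stdBasis n ⟨1, by omega⟩ ∈
      Submodule.span ℝ {v : Fin n → ℝ | ∃ i j k : Fin n, v = Rcurv n hn i j k x} := by
    apply Submodule.subset_span
    exact ⟨⟨2, by omega⟩, ⟨0, by omega⟩, ⟨2, by omega⟩, (rcurv202 n hn x).symm⟩
  have he3 : stdBasis n ⟨3, by omega⟩ ∈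
      Submodule.span ℝ {v : Fin n → ℝ | ∃ i j k : Fin n, v = Rcurv n hn i j k x} := by
    have hm : Rcurv n hn ⟨2, by omega⟩ ⟨0, by omega⟩ ⟨0, by omega⟩ x ∈
        Submodule.span ℝ {v : Fin n → ℝ | ∃ i j k : Fin n, v = Rcurv n hn i j k x} :=
      Submodule.subset_span ⟨⟨2, by omega⟩, ⟨0, by omega⟩, ⟨0, by omega⟩, rfl⟩
    have := Submodule.neg_mem _ hm
    rwa [rcurv200 n hn x, neg_neg] at this
  have hmain : Submodule.span ℝ {v : Fin n → ℝ | ∃ i j k : Fin n, v = Rcurv n hn i j k x} =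
      Submodule.span ℝ
        ({stdBasis n ⟨1, by omega⟩, stdBasis n ⟨3, by omega⟩} : Set (Fin n → ℝ)) := by
    apply le_antisymm
    · rw [Submodule.span_le]
      rintro v ⟨i, j, k, rfl⟩
      rw [decomp n hn (Rcurv n hn i j k x) (fun l h1 h3 => rcurv_off n hn i j k l x h1 h3)]
      exact Submodule.add_mem _
        (Submodule.smul_mem _ _ (Submodule.subset_span (Or.inl rfl)))
        (Submodule.smul_mem _ _ (Submodule.subset_span (Or.inr rfl)))
    · rw [Submodule.span_le]
      rintro v (rfl | rfl)
      · exact he1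
      · exact he3
  refine ⟨hmain, ?_⟩
  intro hbot
  rw [hbot] at he1
  have : stdBasis n ⟨1, by omega⟩ = 0 := by simpa using he1
  have := congrFun this ⟨1, by omega⟩
  simp [stdBasis] at this
end
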